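/- If a changed subset of W-votes in the Copeland construction makes the pairwise contest between a and b an exact tie, then the total weight of W-votes preferring a to b equals K, yielding a sub-multiset of W summing to K. -/

import Mathlib

/-- The four candidates. -/
inductive Cand : Type
  | p | a | b | c
deriving DecidableEq

instance : Fintype Cand where
  elems := {Cand.p, Cand.a, Cand.b, Cand.c}
  complete := by intro x; cases x <;> decide

open Cand

/-- Weighted pairwise margin `D(x,y)`. -/
def marg (E : Multiset (ℕ × List Cand)) (x y : Cand) : ℤ :=
  (E.map fun v => if v.2.idxOf x < v.2.idxOf y then (v.1 : ℤ) else -(v.1 : ℤ)).sum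

/-- Copeland^α score of `x`: number of pairwise wins plus `α` times the number of
pairwise ties. -/
noncomputable def copelandScore (al : ℝ) (E : Multiset (ℕ × List Cand)) (x : Cand) : ℝ :=
  (((Finset.univ.erase x).filter fun y => 0 < marg E x y).card : ℝ) +
    al * (((Finset.univ.erase x).filter fun y => marg E x y = 0).card : ℝ)

/-- `x` wins w.r.t. a score function and a tie-breaking priority order. -/
def Wins {S : Type} [LinearOrder S] (score : Cand → S) (prio : Cand → ℕ) (x : Cand) : Prop :=
  ∀ y, y ≠ x → score y < score x ∨ (score y = score x ∧ prio x < prio y)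

/-- Tie-breaking order `a ≻ b ≻ c ≻ p`. -/
def prioABCP : Cand → ℕ
  | Cand.a => 0
  | Cand.b => 1
  | Cand.c => 2
  | Cand.p => 3

/-- If the changed `W`-votes (each ranking `p` first) make the pairwise contest between
`a` and `b` an exact tie, then the total weight of `W`-votes preferring `a` to `b` is
exactly `K`, yielding a sub-multiset of `W` summing to `K`. -/
theorem stmt_12 (K : ℕ) (hK : 0 < K) (W : Multiset ℕ)
    (hpos : ∀ w ∈ W, 0 < w) (hsum : W.sum = 2 * K)
    (V : Multiset (ℕ × List Cand)) (hV : V.map Prod.fst = W)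
    (hrank : ∀ v ∈ V, v.2.Perm [p, a, b, c] ∧ v.2.head? = some p)
    (htie : marg (V + {(K + 1, [a, p, b, c]), (K + 1, [c, b, a, p])}) a b = 0) :
    ((V.filter fun v => v.2.idxOf a < v.2.idxOf b).map Prod.fst).sum = K ∧
      ∃ W' ≤ W, W'.sum = K := by
  classical
  set q : ℕ × List Cand → Prop := fun v => v.2.idxOf a < v.2.idxOf b with hq
  have hc1 : ([a, p, b, c].idxOf a < [a, p, b, c].idxOf b) := by decide
  have hc2 : ¬ ([c, b, a, p].idxOf a < [c, b, a, p].idxOf b) := by decide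
  have key : ∀ (A : Multiset (ℕ × List Cand)),
      ((A.map fun v => ((v.1 : ℤ))).sum) = ((A.map Prod.fst).sum : ℤ) := fun A => by
    rw [Nat.cast_multiset_sum, Multiset.map_map]; rfl
  have hfix : marg ({(K + 1, [a, p, b, c]), (K + 1, [c, b, a, p])} : Multiset (ℕ × List Cand)) a b = 0 := by
    simp [marg, hc1, hc2]
  have hsplit : marg (V + {(K + 1, [a, p, b, c]), (K + 1, [c, b, a, p])}) a b
      = marg V a b + marg ({(K + 1, [a, p, b, c]), (K + 1, [c, b, a, p])} : Multiset (ℕ × List Cand)) a b := by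
    rw [marg, Multiset.map_add, Multiset.sum_add]; rfl
  have hV0 : marg V a b = 0 := by rw [hsplit, hfix] at htie; omega
  have hAB : V.filter q + V.filter (fun v => ¬ q v) = V := Multiset.filter_add_not _ V
  have hmargA : marg (V.filter q) a b = (((V.filter q).map Prod.fst).sum : ℤ) := by
    rw [marg, Multiset.map_congr rfl fun v hv =>
      if_pos ((Multiset.mem_filter.mp hv).2 : q v), key]
  have hmargB : marg (V.filter (fun v => ¬ q v)) a b
      = -(((V.filter (fun v => ¬ q v)).map Prod.fst).sum : ℤ) := by
    rw [marg, Multiset.map_congr rfl fun v hv =>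
      if_neg ((Multiset.mem_filter.mp hv).2 : ¬ q v)]
    rw [show (fun v : ℕ × List Cand => -(v.1 : ℤ)) = (fun v => (-1) * (v.1 : ℤ)) from by
      funext v; ring, Multiset.sum_map_mul_left, key]
    ring
  have hmargV : marg V a b = marg (V.filter q) a b + marg (V.filter (fun v => ¬ q v)) a b := by
    conv_lhs => rw [← hAB]
    rw [marg, Multiset.map_add, Multiset.sum_add]; rfl
  have hST : ((V.filter q).map Prod.fst).sum + ((V.filter (fun v => ¬ q v)).map Prod.fst).sum
      = 2 * K := by
    have h2 : ((V.filter q).map Prod.fst + (V.filter (fun v => ¬ q v)).map Prod.fst).sum = W.sum := by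
      rw [← Multiset.map_add, hAB, hV]
    rw [Multiset.sum_add] at h2
    omega
  have hS : ((V.filter q).map Prod.fst).sum = K := by
    rw [hV0, hmargA, hmargB] at hmargV
    omega
  exact ⟨hS, (V.filter q).map Prod.fst,
    hV ▸ Multiset.map_le_map (Multiset.filter_le _ _), hS⟩
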